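/- Let G be a connected graph on n ≥ 3 vertices with incidence (boundary) matrix ∂_1. Then the symmetric cohomology polytope P^G = conv[∂_1ᵀ | −∂_1ᵀ] is unimodularly equivalent to the symmetric edge polytope of the cycle C_n on n vertices. -/

import Mathlib

open Matrix BigOperators Pointwise

/-- An abstract simplicial complex on vertex set `Fin n`. -/
structure SC (n : ℕ) where
  faces : Finset (Finset (Fin n))
  down_closed : ∀ σ ∈ faces, ∀ τ, τ ⊆ σ → τ.Nonempty → τ ∈ faces
  face_nonempty : ∀ σ ∈ faces, σ.Nonempty

namespace SC

variable {n : ℕ}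

/-- `K` is `d`-dimensional. -/
def dimIs (K : SC n) (d : ℕ) : Prop :=
  (∀ σ ∈ K.faces, σ.card ≤ d + 1) ∧ ∃ σ ∈ K.faces, σ.card = d + 1

/-- `K` is pure of dimension `d`. -/
def pure (K : SC n) (d : ℕ) : Prop :=
  ∀ σ ∈ K.faces, ∃ τ ∈ K.faces, σ ⊆ τ ∧ τ.card = d + 1

/-- The `j`-dimensional faces of `K`. -/
abbrev fdex (K : SC n) (j : ℕ) : Type := {σ : Finset (Fin n) // σ ∈ K.faces ∧ σ.card = j + 1}

end SC

/-- Entry of the simplicial boundary matrix: for a codimension-one subface `τ ⊆ σ`,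
the sign `(-1)^k` where `k` is the position of the vertex removed from `σ`. -/
def bEntry {n : ℕ} (τ σ : Finset (Fin n)) : ℤ :=
  if τ ⊆ σ ∧ σ.card = τ.card + 1 then
    ∑ v ∈ σ \ τ, (-1 : ℤ) ^ ((σ.filter fun w => w < v).card)
  else 0

/-- The boundary matrix from `(j+1)`-dimensional faces to `j`-dimensional faces,
i.e. the boundary map `∂_{j+2}`… no: `K.B j` is the map `∂` whose columns are indexed
by the `(j+1)`-faces; in homological notation `K.B (d-1)` is `∂_d`. -/
def SC.B {n : ℕ} (K : SC n) (j : ℕ) : Matrix (K.fdex j) (K.fdex (j + 1)) ℤ :=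
  fun τ σ => bEntry τ.1 σ.1

/-- Strong connectivity of a `(j+1)`-dimensional pure complex: any two facets are
connected by a chain of facets successively sharing a ridge. -/
def SC.StronglyConnected {n : ℕ} (K : SC n) (j : ℕ) : Prop :=
  ∀ a b : K.fdex (j + 1),
    Relation.ReflTransGen (fun σ σ' : K.fdex (j + 1) => (σ.1 ∩ σ'.1).card = j + 1) a b

/-- the number of facets (of a `(j+1)`-dimensional complex) containing a given ridge -/
def SC.ridgeDeg {n : ℕ} (K : SC n) (j : ℕ) (τ : K.fdex j) : ℕ :=
  (Finset.univ.filter fun σ : K.fdex (j + 1) => τ.1 ⊆ σ.1).card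

section Poly

variable {ι κ : Type*} [Fintype ι] [Fintype κ]

def dot (x y : ι → ℝ) : ℝ := ∑ i, x i * y i

/-- the columns of `A` and their negatives, as real vectors -/
def colsPM (A : Matrix ι κ ℤ) : Set (ι → ℝ) :=
  {x | ∃ j : κ, x = (fun i => (A i j : ℝ)) ∨ x = fun i => -(A i j : ℝ)}

/-- the centrally symmetric polytope `conv [A | -A]` -/
def symPoly (A : Matrix ι κ ℤ) : Set (ι → ℝ) := convexHull ℝ (colsPM A)

def intVec (x : ι → ℝ) : Prop := ∀ i, ∃ z : ℤ, x i = (z : ℝ)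

def latticePts (P : Set (ι → ℝ)) : Set (ι → ℝ) := {x ∈ P | intVec x}

/-- a set is a lattice polytope iff it is the convex hull of its lattice points -/
def IsLatticePolytope (Q : Set (ι → ℝ)) : Prop := Q = convexHull ℝ (latticePts Q)

/-- the polar dual, taken within the linear span of `P` -/
def polarIn (P : Set (ι → ℝ)) : Set (ι → ℝ) :=
  {y | y ∈ Submodule.span ℝ P ∧ ∀ x ∈ P, dot x y ≤ 1}

/-- `P` is reflexive: its polar dual (within the affine hull of `P`) is a lattice polytope -/
def IsReflexive (P : Set (ι → ℝ)) : Prop := IsLatticePolytope (polarIn P)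

/-- every lattice point of the span of `P` is an integer combination of lattice points of `P` -/
def IsSpanning (P : Set (ι → ℝ)) : Prop :=
  ∀ x : ι → ℝ, intVec x → x ∈ Submodule.span ℝ P →
    x ∈ (Submodule.span ℤ (latticePts P) : Set (ι → ℝ))

/-- the integer decomposition property -/
def IsIDP (P : Set (ι → ℝ)) : Prop :=
  ∀ k : ℕ, ∀ x : ι → ℝ, intVec x → x ∈ (k : ℝ) • P →
    ∃ f : Fin k → (ι → ℝ), (∀ i, f i ∈ latticePts P) ∧ x = ∑ i, f i

/-- combinatorial equivalence: an inclusion-order isomorphism between the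
posets of exposed faces -/
def CombEquiv (P : Set (ι → ℝ)) (Q : Set (κ → ℝ)) : Prop :=
  Nonempty ({F : Set (ι → ℝ) // IsExposed ℝ P F} ≃o {F : Set (κ → ℝ) // IsExposed ℝ Q F})

/-- unimodular equivalence: an affine isomorphism between the affine hulls which
matches up the two polytopes and the lattice points of the affine hulls -/
def UniEquiv (P : Set (ι → ℝ)) (Q : Set (κ → ℝ)) : Prop :=
  ∃ f : (ι → ℝ) →ᵃ[ℝ] (κ → ℝ),
    Set.BijOn f (affineSpan ℝ P : Set (ι → ℝ)) (affineSpan ℝ Q : Set (κ → ℝ)) ∧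
    f '' P = Q ∧
    (∀ x ∈ (affineSpan ℝ P : Set (ι → ℝ)), intVec x → intVec (f x)) ∧
    (∀ y ∈ (affineSpan ℝ Q : Set (κ → ℝ)), intVec y →
      ∃ x ∈ (affineSpan ℝ P : Set (ι → ℝ)), intVec x ∧ f x = y)

/-- the facets of a polytope: the maximal proper exposed faces -/
def polyFacets (P : Set (ι → ℝ)) : Set (Set (ι → ℝ)) :=
  {F | IsExposed ℝ P F ∧ F ⊂ P ∧ ∀ G, IsExposed ℝ P G → F ⊆ G → G ⊂ P → G = F}

/-- independence of a set of columns of a rational matrix -/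
def colsIndep (A : Matrix ι κ ℚ) (S : Set κ) : Prop :=
  LinearIndependent ℚ (fun j : S => (fun i => A i (j : κ)))

/-- `S` is a basis of the column matroid `M[A]` -/
def IsBasisSet (A : Matrix ι κ ℚ) (S : Set κ) : Prop :=
  colsIndep A S ∧ ∀ S' : Set κ, S ⊆ S' → colsIndep A S' → S' = S

end Poly

/-- the standard cross-polytope -/
def stdCross (s : ℕ) : Set (Fin s → ℝ) :=
  convexHull ℝ {x | ∃ i : Fin s, x = Pi.single i 1 ∨ x = Pi.single i (-1)}

/-- a signed incidence matrix of the cycle on `n` vertices: column `j` is `e_{j+1} - e_j` -/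
def cycMat (n : ℕ) : Matrix (Fin n) (Fin n) ℤ :=
  fun i j => (if (i : ℕ) = ((j : ℕ) + 1) % n then 1 else 0) - (if i = j then 1 else 0)

/-- a signed incidence matrix of the facet-ridge graph of a `(j+1)`-dimensional
pseudomanifold without boundary: rows are facets, columns are ridges, and the two
facets containing a ridge receive opposite signs. -/
noncomputable def SC.frg {n : ℕ} (K : SC n) (j : ℕ) :
    Matrix (K.fdex (j + 1)) (K.fdex j) ℤ :=
  fun σ τ =>
    if τ.1 ⊆ σ.1 then
      (if ∀ σ' : K.fdex (j + 1), τ.1 ⊆ σ'.1 → σ' ≠ σ →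
          (σ'.1 \ τ.1).min ≤ (σ.1 \ τ.1).min then 1 else -1)
    else 0


lemma coe_affineSpan_hull {ι : Type*} [Fintype ι] {s : Set (ι → ℝ)}
    (h0 : (0 : ι → ℝ) ∈ affineSpan ℝ s) :
    (affineSpan ℝ (convexHull ℝ s) : Set (ι → ℝ)) = ↑(Submodule.span ℝ s) := by
  rw [affineSpan_convexHull, ← affineSpan_insert_eq_affineSpan ℝ h0]
  exact affineSpan_insert_zero s

lemma bEntry_pair {n : ℕ} (b c u : Fin n) (hbc : b ≠ c) :
    bEntry {u} {b, c} =
      (if b < c then 1 else -1) *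
        ((if u = c then 1 else 0) - (if u = b then 1 else 0)) := by
  have hcard : ({b, c} : Finset (Fin n)).card = 2 := Finset.card_pair hbc
  by_cases hub : u = b
  · subst hub
    have hsub : ({u} : Finset (Fin n)) ⊆ {u, c} := by
      intro x hx; simp only [Finset.mem_singleton] at hx; simp [hx]
    have hsd : ({u, c} : Finset (Fin n)) \ {u} = {c} := by
      ext x; simp only [Finset.mem_sdiff, Finset.mem_insert, Finset.mem_singleton]
      constructor
      · rintro ⟨h1 | h1, h2⟩ <;> tauto
      · rintro rfl; exact ⟨Or.inr rfl, fun h => hbc h.symm⟩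
    rw [bEntry, if_pos ⟨hsub, by simp [hcard]⟩, hsd, Finset.sum_singleton]
    have hfil : ({u, c} : Finset (Fin n)).filter (fun w => w < c) =
        if u < c then {u} else ∅ := by
      split_ifs with h
      · ext x; simp only [Finset.mem_filter, Finset.mem_insert, Finset.mem_singleton]
        constructor
        · rintro ⟨h1 | h1, h2⟩; exact h1; exact absurd h2 (by simp [h1])
        · rintro rfl; exact ⟨Or.inl rfl, h⟩
      · ext x; simp only [Finset.mem_filter, Finset.mem_insert, Finset.mem_singleton,
          Finset.notMem_empty, iff_false]
        rintro ⟨h1 | h1, h2⟩; exact h (h1 ▸ h2); exact absurd h2 (by simp [h1])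
    rw [hfil]
    split_ifs with h <;> simp_all
  · by_cases huc : u = c
    · subst huc
      have hsub : ({u} : Finset (Fin n)) ⊆ {b, u} := by
        intro x hx; simp only [Finset.mem_singleton] at hx; simp [hx]
      have hsd : ({b, u} : Finset (Fin n)) \ {u} = {b} := by
        ext x; simp only [Finset.mem_sdiff, Finset.mem_insert, Finset.mem_singleton]
        constructor
        · rintro ⟨h1 | h1, h2⟩ <;> tauto
        · rintro rfl; exact ⟨Or.inl rfl, hbc⟩
      rw [bEntry, if_pos ⟨hsub, by simp [hcard]⟩, hsd, Finset.sum_singleton]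
      have hfil : ({b, u} : Finset (Fin n)).filter (fun w => w < b) =
          if u < b then {u} else ∅ := by
        split_ifs with h
        · ext x; simp only [Finset.mem_filter, Finset.mem_insert, Finset.mem_singleton]
          constructor
          · rintro ⟨h1 | h1, h2⟩; exact absurd h2 (by simp [h1]); exact h1
          · rintro rfl; exact ⟨Or.inr rfl, h⟩
        · ext x; simp only [Finset.mem_filter, Finset.mem_insert, Finset.mem_singleton,
            Finset.notMem_empty, iff_false]
          rintro ⟨h1 | h1, h2⟩; exact absurd h2 (by simp [h1]); exact h (h1 ▸ h2)
      rw [hfil]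
      rcases lt_trichotomy b u with h | h | h
      · simp_all [not_lt.mpr h.le]
      · exact absurd h hbc
      · simp_all [not_lt.mpr h.le, asymm h]
    · have : ¬ (({u} : Finset (Fin n)) ⊆ {b, c} ∧ ({b,c}:Finset (Fin n)).card = ({u}:Finset (Fin n)).card + 1) := by
        rintro ⟨h1, -⟩
        have := h1 (Finset.mem_singleton_self u)
        simp only [Finset.mem_insert, Finset.mem_singleton] at this
        tauto
      rw [bEntry, if_neg this]
      simp [hub, huc]


lemma bEntry_colsum {n : ℕ} (b c : Fin n) (hbc : b ≠ c) :
    ∑ u : Fin n, bEntry {u} {b, c} = 0 := by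
  simp only [fun u => bEntry_pair b c u hbc, ← Finset.mul_sum]
  have : ∑ u : Fin n, ((if u = c then (1:ℤ) else 0) - (if u = b then 1 else 0)) = 0 := by
    rw [Finset.sum_sub_distrib]
    simp
  rw [this, mul_zero]

lemma flow_exists {n : ℕ} (K : SC n) {u v : Fin n}
    (h : Relation.ReflTransGen
      (fun a b : Fin n => a ≠ b ∧ ({a, b} : Finset (Fin n)) ∈ K.faces) u v) :
    ∃ F : K.fdex 1 → ℤ, ∀ τ : K.fdex 0,
      ∑ e : K.fdex 1, K.B 0 τ e * F e =
        (if τ.1 = {v} then 1 else 0) - (if τ.1 = {u} then 1 else 0) := by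
  classical
  induction h with
  | refl => exact ⟨0, fun τ => by simp⟩
  | @tail b c hub hbc ih =>
    obtain ⟨F, hF⟩ := ih
    obtain ⟨hne, hmem⟩ := hbc
    set s : ℤ := if b < c then 1 else -1 with hs
    set e0 : K.fdex 1 := ⟨{b, c}, hmem, Finset.card_pair hne⟩ with he0
    refine ⟨fun e => F e + (if e = e0 then s else 0), fun τ => ?_⟩
    obtain ⟨w, hw⟩ := Finset.card_eq_one.mp τ.2.2
    have hB : K.B 0 τ e0 =
        s * ((if w = c then 1 else 0) - (if w = b then 1 else 0)) := by
      show bEntry τ.1 ({b, c} : Finset (Fin n)) = _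
      rw [hw]; exact bEntry_pair b c w hne
    have step : ∑ e : K.fdex 1, K.B 0 τ e * (if e = e0 then s else 0)
        = (if w = c then 1 else 0) - (if w = b then 1 else 0) := by
      have : ∀ e : K.fdex 1, K.B 0 τ e * (if e = e0 then s else 0)
          = if e = e0 then K.B 0 τ e0 * s else 0 := by
        intro e
        by_cases he : e = e0 <;> simp [he]
      rw [Finset.sum_congr rfl fun e _ => this e, Finset.sum_ite_eq' Finset.univ e0]
      simp only [Finset.mem_univ, if_true, hB]
      rw [hs]; split_ifs <;> ring
    have expand : ∑ e : K.fdex 1, K.B 0 τ e * (F e + (if e = e0 then s else 0))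
        = (∑ e : K.fdex 1, K.B 0 τ e * F e)
          + ∑ e : K.fdex 1, K.B 0 τ e * (if e = e0 then s else 0) := by
      rw [← Finset.sum_add_distrib]
      exact Finset.sum_congr rfl fun e _ => by ring
    rw [expand, hF, step, hw]
    simp only [Finset.singleton_inj]
    ring

lemma intVec_mulVec {ι κ : Type*} [Fintype ι] [Fintype κ] (M : Matrix ι κ ℤ)
    {x : κ → ℝ} (hx : intVec x) :
    intVec (Matrix.mulVec (fun i j => (M i j : ℝ)) x) := by
  choose z hz using hx
  intro i
  refine ⟨∑ j, M i j * z j, ?_⟩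
  simp only [Matrix.mulVec, dotProduct, hz]
  push_cast
  rfl

lemma cycMat_eq {n : ℕ} [NeZero n] (hn : 3 ≤ n) (j v : Fin n) :
    cycMat n j v = (if j = v + 1 then 1 else 0) - (if j = v then 1 else 0) := by
  have h1 : ((1 : Fin n) : ℕ) = 1 := by
    have : (1 : ℕ) < n := by omega
    simp [Fin.val_one', Nat.mod_eq_of_lt this]
  have hval : ((v + 1 : Fin n) : ℕ) = ((v : ℕ) + 1) % n := by
    rw [Fin.add_def, h1]
  have : ((j : ℕ) = ((v : ℕ) + 1) % n) ↔ j = v + 1 := by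
    rw [← hval, Fin.ext_iff]
  rw [cycMat]
  congr 1
  simp [this]


lemma N_mul_cyc {n : ℕ} [NeZero n] (hn : 3 ≤ n) (K : SC n)
    (vtx : Fin n → K.fdex 0) (hvtx : ∀ u, (vtx u).1 = {u})
    (e : K.fdex 1) (v : Fin n) :
    ∑ j : Fin n,
        (∑ u : Fin n, if (u : ℕ) < (j : ℕ) then K.B 0 (vtx u) e else 0) * cycMat n j v
      = K.B 0 (vtx v) e := by
  classical
  set g : Fin n → ℤ := fun u => K.B 0 (vtx u) e with hg
  set N : Fin n → ℤ := fun j => ∑ u : Fin n, if (u : ℕ) < (j : ℕ) then g u else 0 with hNdef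
  have hsum0 : ∑ u : Fin n, g u = 0 := by
    obtain ⟨b, c, hbc, hbce⟩ := Finset.card_eq_two.mp e.2.2
    have : ∀ u, g u = bEntry {u} ({b, c} : Finset (Fin n)) := by
      intro u
      show bEntry (vtx u).1 e.1 = _
      rw [hvtx u, hbce]
    rw [Finset.sum_congr rfl fun u _ => this u]
    exact bEntry_colsum b c hbc
  have step1 : ∑ j : Fin n, N j * cycMat n j v = N (v + 1) - N v := by
    have : ∀ j : Fin n, N j * cycMat n j v
        = (if j = v + 1 then N j else 0) - (if j = v then N j else 0) := by
      intro j
      rw [cycMat_eq hn]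
      split_ifs <;> ring
    rw [Finset.sum_congr rfl fun j _ => this j, Finset.sum_sub_distrib]
    rw [Finset.sum_ite_eq' Finset.univ (v + 1) N, Finset.sum_ite_eq' Finset.univ v N]
    simp
  rw [step1]
  have h1 : ((v + 1 : Fin n) : ℕ) = ((v : ℕ) + 1) % n := by
    rw [Fin.add_def]
    have : (1 : ℕ) < n := by omega
    simp [Fin.val_one', Nat.mod_eq_of_lt this]
  by_cases hv : (v : ℕ) + 1 < n
  · have h2 : ((v + 1 : Fin n) : ℕ) = (v : ℕ) + 1 := by
      rw [h1, Nat.mod_eq_of_lt hv]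
    have : N (v + 1) - N v = ∑ u : Fin n, (if u = v then g u else 0) := by
      rw [hNdef]
      simp only [h2]
      rw [← Finset.sum_sub_distrib]
      refine Finset.sum_congr rfl fun u _ => ?_
      by_cases huv : u = v
      · subst huv
        simp [Nat.lt_irrefl, Nat.lt_succ_iff]
      · have hne : (u : ℕ) ≠ (v : ℕ) := fun h => huv (Fin.ext h)
        have hiff : ((u : ℕ) < (v : ℕ) + 1) ↔ ((u : ℕ) < (v : ℕ)) := by omega
        simp [hiff, huv]
    rw [this, Finset.sum_ite_eq' Finset.univ v g]
    simp [hg]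
  · have hvn : (v : ℕ) + 1 = n := by have := v.isLt; omega
    have h2 : ((v + 1 : Fin n) : ℕ) = 0 := by
      rw [h1, hvn, Nat.mod_self]
    have hN1 : N (v + 1) = 0 := by
      rw [hNdef]
      simp [h2]
    have hN2 : N v = (∑ u : Fin n, g u) - g v := by
      have : ∀ u : Fin n, (if (u : ℕ) < (v : ℕ) then g u else 0)
          = g u - (if u = v then g u else 0) := by
        intro u
        by_cases huv : u = v
        · subst huv; simp
        · have hne : (u : ℕ) ≠ (v : ℕ) := fun h => huv (Fin.ext h)
          have hlt : (u : ℕ) < (v : ℕ) := by have := u.isLt; omega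
          simp [hlt, huv]
      rw [hNdef]
      simp only
      rw [Finset.sum_congr rfl fun u _ => this u, Finset.sum_sub_distrib,
        Finset.sum_ite_eq' Finset.univ v g]
      simp
    rw [hN1, hN2, hsum0]
    ring

/-- Let `G` be a connected graph (a 1-dimensional simplicial
complex containing all vertices) on `n ≥ 3` vertices with incidence matrix
`∂_1 = K.B 0`. Then `P^G = conv[∂_1ᵀ | −∂_1ᵀ]` is unimodularly equivalent to the
symmetric edge polytope of the cycle `C_n`. -/
theorem stmt16 (n : ℕ) (hn : 3 ≤ n) (K : SC n)
    (hdim : K.dimIs 1)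
    (hvert : ∀ v : Fin n, ({v} : Finset (Fin n)) ∈ K.faces)
    (hconn : ∀ u v : Fin n,
      Relation.ReflTransGen
        (fun a b : Fin n => a ≠ b ∧ ({a, b} : Finset (Fin n)) ∈ K.faces) u v) :
    UniEquiv (symPoly (K.B 0)ᵀ) (symPoly (cycMat n)) := by
  classical
  haveI : NeZero n := ⟨by omega⟩
  -- vertex indexing of 0-faces
  set vtx : Fin n → K.fdex 0 := fun v => ⟨{v}, hvert v, Finset.card_singleton v⟩ with hvtxdef
  have hvtx : ∀ u, (vtx u).1 = {u} := fun u => rfl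
  have vtx_surj : ∀ τ : K.fdex 0, ∃ v, τ = vtx v := by
    intro τ
    obtain ⟨w, hw⟩ := Finset.card_eq_one.mp τ.2.2
    exact ⟨w, Subtype.ext hw⟩
  -- columns
  set colP : K.fdex 0 → (K.fdex 1 → ℝ) := fun τ e => ((K.B 0) τ e : ℝ) with hcolP
  set colQ : Fin n → (Fin n → ℝ) := fun j i => ((cycMat n i j : ℤ) : ℝ) with hcolQ
  -- integer matrices
  choose Mf hMf using fun i : Fin n => flow_exists K (hconn i (i - 1))
  set N : K.fdex 1 → Fin n → ℤ :=
    fun e j => ∑ u : Fin n, if (u : ℕ) < (j : ℕ) then K.B 0 (vtx u) e else 0 with hNdef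
  -- linear maps
  set fL : (K.fdex 1 → ℝ) →ₗ[ℝ] (Fin n → ℝ) :=
    Matrix.mulVecLin (fun i e => ((Mf i e : ℤ) : ℝ)) with hfL
  set gL : (Fin n → ℝ) →ₗ[ℝ] (K.fdex 1 → ℝ) :=
    Matrix.mulVecLin (fun e j => ((N e j : ℤ) : ℝ)) with hgL
  have hfcol : ∀ v : Fin n, fL (colP (vtx v)) = colQ v := by
    intro v
    funext i
    show ∑ e : K.fdex 1, ((Mf i e : ℤ) : ℝ) * ((K.B 0) (vtx v) e : ℝ) = ((cycMat n i v : ℤ) : ℝ)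
    have hz : ∑ e : K.fdex 1, K.B 0 (vtx v) e * Mf i e
        = (if ({v} : Finset (Fin n)) = {i - 1} then 1 else 0)
          - (if ({v} : Finset (Fin n)) = {i} then 1 else 0) := hMf i (vtx v)
    have : ∑ e : K.fdex 1, ((Mf i e : ℤ) : ℝ) * ((K.B 0) (vtx v) e : ℝ)
        = ((∑ e : K.fdex 1, K.B 0 (vtx v) e * Mf i e : ℤ) : ℝ) := by
      push_cast
      exact Finset.sum_congr rfl fun e _ => by ring
    rw [this, hz, cycMat_eq hn]
    have e1 : (({v} : Finset (Fin n)) = {i - 1}) ↔ (i = v + 1) := by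
      rw [Finset.singleton_inj, eq_sub_iff_add_eq, eq_comm]
    have e2 : (({v} : Finset (Fin n)) = {i}) ↔ (i = v) := by
      rw [Finset.singleton_inj, eq_comm]
    simp only [e1, e2]
  have hgcol : ∀ j : Fin n, gL (colQ j) = colP (vtx j) := by
    intro j
    funext e
    show ∑ k : Fin n, ((N e k : ℤ) : ℝ) * ((cycMat n k j : ℤ) : ℝ) = ((K.B 0) (vtx j) e : ℝ)
    have : ∑ k : Fin n, ((N e k : ℤ) : ℝ) * ((cycMat n k j : ℤ) : ℝ)
        = ((∑ k : Fin n, N e k * cycMat n k j : ℤ) : ℝ) := by push_cast; ring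
    rw [this, N_mul_cyc hn K vtx hvtx e j]
  -- description of the +/- column sets
  have hmemP : ∀ x, x ∈ colsPM (K.B 0)ᵀ ↔ ∃ τ, x = colP τ ∨ x = -colP τ := by
    intro x
    constructor
    · rintro ⟨τ, h | h⟩
      · exact ⟨τ, Or.inl (by funext e; rw [h]; rfl)⟩
      · exact ⟨τ, Or.inr (by funext e; rw [h]; rfl)⟩
    · rintro ⟨τ, h | h⟩
      · exact ⟨τ, Or.inl (by funext e; rw [h]; rfl)⟩
      · exact ⟨τ, Or.inr (by funext e; rw [h]; rfl)⟩
  have hmemQ : ∀ x, x ∈ colsPM (cycMat n) ↔ ∃ j, x = colQ j ∨ x = -colQ j := by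
    intro x
    constructor
    · rintro ⟨j, h | h⟩
      · exact ⟨j, Or.inl (by funext i; rw [h])⟩
      · exact ⟨j, Or.inr (by funext i; rw [h]; rfl)⟩
    · rintro ⟨j, h | h⟩
      · exact ⟨j, Or.inl (by funext i; rw [h])⟩
      · exact ⟨j, Or.inr (by funext i; rw [h]; rfl)⟩
  -- image of the generators
  have himg : fL '' colsPM (K.B 0)ᵀ = colsPM (cycMat n) := by
    apply Set.eq_of_subset_of_subset
    · rintro x ⟨y, hy, rfl⟩
      rw [hmemP] at hy
      obtain ⟨τ, hy | hy⟩ := hy <;> obtain ⟨v, rfl⟩ := vtx_surj τ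
      · rw [hmemQ]; exact ⟨v, Or.inl (by rw [hy, hfcol])⟩
      · rw [hmemQ]; exact ⟨v, Or.inr (by rw [hy, map_neg, hfcol])⟩
    · intro x hx
      rw [hmemQ] at hx
      obtain ⟨j, hx | hx⟩ := hx
      · exact ⟨colP (vtx j), (hmemP _).mpr ⟨vtx j, Or.inl rfl⟩, by rw [hfcol, hx]⟩
      · exact ⟨-colP (vtx j), by
          refine ⟨(hmemP _).mpr ⟨vtx j, Or.inr rfl⟩, ?_⟩
          rw [map_neg, hfcol, hx]⟩
  have hgimg : ∀ y ∈ colsPM (cycMat n), gL y ∈ colsPM (K.B 0)ᵀ := by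
    intro y hy
    rw [hmemQ] at hy
    obtain ⟨j, hy | hy⟩ := hy
    · exact (hmemP _).mpr ⟨vtx j, Or.inl (by rw [hy, hgcol])⟩
    · exact (hmemP _).mpr ⟨vtx j, Or.inr (by rw [hy, map_neg, hgcol])⟩
  -- spans
  set S : Submodule ℝ (K.fdex 1 → ℝ) := Submodule.span ℝ (colsPM (K.B 0)ᵀ) with hS
  set T : Submodule ℝ (Fin n → ℝ) := Submodule.span ℝ (colsPM (cycMat n)) with hT
  have hfmapsS : ∀ x ∈ S, fL x ∈ T := by
    intro x hx
    have : Submodule.map fL S = T := by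
      rw [hS, Submodule.map_span, himg, hT]
    rw [← this]
    exact Submodule.mem_map_of_mem hx
  have hgmapsT : ∀ y ∈ T, gL y ∈ S := by
    intro y hy
    have h1 : Submodule.map gL T ≤ S := by
      rw [hT, Submodule.map_span, Submodule.span_le]
      rintro x ⟨y', hy', rfl⟩
      exact Submodule.subset_span (hgimg y' hy')
    exact h1 (Submodule.mem_map_of_mem hy)
  have hgf : ∀ x ∈ S, gL (fL x) = x := by
    intro x hx
    induction hx using Submodule.span_induction with
    | mem x hx =>
      rw [hmemP] at hx
      obtain ⟨τ, h | h⟩ := hx <;> obtain ⟨v, rfl⟩ := vtx_surj τ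
      · rw [h, hfcol, hgcol]
      · rw [h, map_neg, map_neg, hfcol, hgcol]
    | zero => simp
    | add a b _ _ ha hb => rw [map_add, map_add, ha, hb]
    | smul c a _ ha => rw [_root_.map_smul, _root_.map_smul, ha]
  have hfg : ∀ y ∈ T, fL (gL y) = y := by
    intro y hy
    induction hy using Submodule.span_induction with
    | mem y hy =>
      rw [hmemQ] at hy
      obtain ⟨j, h | h⟩ := hy
      · rw [h, hgcol, hfcol]
      · rw [h, map_neg, map_neg, hgcol, hfcol]
    | zero => simp
    | add a b _ _ ha hb => rw [map_add, map_add, ha, hb]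
    | smul c a _ ha => rw [_root_.map_smul, _root_.map_smul, ha]
  -- zero in the polytopes / affine spans as sets
  have h0P : (0 : K.fdex 1 → ℝ) ∈ affineSpan ℝ (colsPM (K.B 0)ᵀ) := by
    have hx : colP (vtx 0) ∈ colsPM (K.B 0)ᵀ := (hmemP _).mpr ⟨vtx 0, Or.inl rfl⟩
    have hx' : -colP (vtx 0) ∈ colsPM (K.B 0)ᵀ := (hmemP _).mpr ⟨vtx 0, Or.inr rfl⟩
    have hmid : (0 : K.fdex 1 → ℝ)
        = (1/2 : ℝ) • colP (vtx 0) + (1/2 : ℝ) • (-colP (vtx 0)) := by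
      rw [smul_neg, add_neg_cancel]
    have : (0 : K.fdex 1 → ℝ) ∈ convexHull ℝ (colsPM (K.B 0)ᵀ) := by
      rw [hmid]
      exact (convex_convexHull ℝ _) (subset_convexHull ℝ _ hx) (subset_convexHull ℝ _ hx')
        (by norm_num) (by norm_num) (by norm_num)
    exact convexHull_subset_affineSpan _ this
  have h0Q : (0 : Fin n → ℝ) ∈ affineSpan ℝ (colsPM (cycMat n)) := by
    have hx : colQ 0 ∈ colsPM (cycMat n) := (hmemQ _).mpr ⟨0, Or.inl rfl⟩
    have hx' : -colQ 0 ∈ colsPM (cycMat n) := (hmemQ _).mpr ⟨0, Or.inr rfl⟩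
    have hmid : (0 : Fin n → ℝ) = (1/2 : ℝ) • colQ 0 + (1/2 : ℝ) • (-colQ 0) := by
      rw [smul_neg, add_neg_cancel]
    have : (0 : Fin n → ℝ) ∈ convexHull ℝ (colsPM (cycMat n)) := by
      rw [hmid]
      exact (convex_convexHull ℝ _) (subset_convexHull ℝ _ hx) (subset_convexHull ℝ _ hx')
        (by norm_num) (by norm_num) (by norm_num)
    exact convexHull_subset_affineSpan _ this
  have hPspan : (affineSpan ℝ (symPoly (K.B 0)ᵀ) : Set (K.fdex 1 → ℝ)) = ↑S := by
    rw [symPoly, coe_affineSpan_hull h0P, hS]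
  have hQspan : (affineSpan ℝ (symPoly (cycMat n)) : Set (Fin n → ℝ)) = ↑T := by
    rw [symPoly, coe_affineSpan_hull h0Q, hT]
  -- assemble
  refine ⟨fL.toAffineMap, ?_, ?_, ?_, ?_⟩
  · rw [hPspan, hQspan]
    refine ⟨fun x hx => hfmapsS x hx, fun x hx y hy hxy => ?_, fun y hy => ?_⟩
    · have := hgf x hx
      rw [LinearMap.coe_toAffineMap] at hxy
      rw [← this, hxy, hgf y hy]
    · exact ⟨gL y, hgmapsT y hy, hfg y hy⟩
  · show fL '' symPoly (K.B 0)ᵀ = symPoly (cycMat n)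
    rw [symPoly, symPoly, fL.image_convexHull, himg]
  · intro x _ hx
    rw [LinearMap.coe_toAffineMap]
    exact intVec_mulVec (fun i e => Mf i e) hx
  · intro y hy hyint
    rw [hQspan] at hy
    refine ⟨gL y, ?_, ?_, hfg y hy⟩
    · rw [hPspan]; exact hgmapsT y hy
    · exact intVec_mulVec (fun e j => N e j) hyint
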